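/- Let d, w₁, w₂ be odd positive integers and χ a Dirichlet character of conductor d. Then for all n ≥ 0: w₂^n ∑_{l=0}^{d w₂ − 1} (−1)^l χ(l) 𝓔_{n, λ/w₂, χ}(w₁ x + (w₁/w₂) l) = w₁^n ∑_{l=0}^{d w₁ − 1} (−1)^l χ(l) 𝓔_{n, λ/w₁, χ}(w₂ x + (w₂/w₁) l), as an identity of polynomials in x over ℚ(λ) (equivalently, for every nonzero λ ∈ ℂ). -/

import Mathlib

open scoped Nat

/-- The degenerate falling factorial `(x|λ)_n = x(x−λ)⋯(x−(n−1)λ)`. -/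
noncomputable def degFall {R : Type*} [CommRing R] (x lam : R) (n : ℕ) : R :=
  ∏ j ∈ Finset.range n, (x - (j : R) * lam)

/-- `(1+λt)^{y/λ} := ∑_{n≥0} (y|λ)_n tⁿ/n!` as a formal power series. -/
noncomputable def degSeries {R : Type*} [CommRing R] [Algebra ℚ R] (y lam : R) :
    PowerSeries R :=
  PowerSeries.mk fun n => (n ! : ℚ)⁻¹ • degFall y lam n

/-- The generating identity defining the generalized degenerate Euler polynomials
`𝓔_{n,λ,χ}(x)` attached to χ, with parameter `mu`:
`((1+μt)^{d/μ}+1)·∑ 𝓔_{n,μ,χ}(x) tⁿ/n! = 2(∑_{a<d}(−1)^a χ(a)(1+μt)^{a/μ})(1+μt)^{x/μ}`. -/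
noncomputable def genDegEulerRel (d : ℕ) (χ : DirichletCharacter ℂ d) (mu : ℂ)
    (E : ℕ → Polynomial ℂ) : Prop :=
  (degSeries (Polynomial.C (d : ℂ)) (Polynomial.C mu) + 1) *
      PowerSeries.mk (fun n => (n ! : ℂ)⁻¹ • E n)
    = 2 * ((∑ a ∈ Finset.range d,
        ((-1 : ℂ) ^ a * χ (a : ZMod d)) • degSeries (Polynomial.C (a : ℂ)) (Polynomial.C mu)) *
        degSeries Polynomial.X (Polynomial.C mu))

open Finset Polynomial
open scoped Nat

section aux
variable {R : Type*} [CommRing R]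

lemma degFall_zero (y lam : R) : degFall y lam 0 = 1 := by simp [degFall]

lemma degFall_succ (y lam : R) (n : ℕ) :
    degFall y lam (n + 1) = degFall y lam n * (y - (n : R) * lam) := by
  simp [degFall, Finset.prod_range_succ]

lemma degFall_vandermonde (y z lam : R) (n : ℕ) :
    degFall (y + z) lam n
      = ∑ k ∈ Finset.range (n + 1),
          (n.choose k : R) * (degFall y lam k * degFall z lam (n - k)) := by
  induction n with
  | zero => simp [degFall]
  | succ n ih =>
    have key : ∀ k ∈ Finset.range (n + 1),
        (n.choose k : R) * (degFall y lam k * degFall z lam (n - k)) * ((y + z) - (n : R) * lam)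
          = (n.choose k : R) * (degFall y lam (k+1) * degFall z lam (n - k))
            + (n.choose k : R) * (degFall y lam k * degFall z lam (n - k + 1)) := by
      intro k hk
      have hkn : k ≤ n := Nat.lt_succ_iff.mp (Finset.mem_range.mp hk)
      have hcast : ((n - k : ℕ) : R) = (n : R) - (k : R) := by
        exact_mod_cast Nat.cast_sub hkn
      rw [degFall_succ, degFall_succ, hcast]
      ring_nf
    have step1 : degFall (y + z) lam (n + 1)
        = (∑ k ∈ Finset.range (n + 1),
            (n.choose k : R) * (degFall y lam (k+1) * degFall z lam (n - k)))
          + ∑ k ∈ Finset.range (n + 1),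
            (n.choose k : R) * (degFall y lam k * degFall z lam (n - k + 1)) := by
      rw [degFall_succ, ih, Finset.sum_mul, Finset.sum_congr rfl key,
        Finset.sum_add_distrib]
    rw [step1]
    -- now massage RHS
    rw [Finset.sum_range_succ' (fun k => ((n+1).choose k : R)
        * (degFall y lam k * degFall z lam (n + 1 - k)))]
    have hcongr : ∀ k ∈ Finset.range (n+1),
        (((n+1).choose (k+1) : R) * (degFall y lam (k+1) * degFall z lam (n + 1 - (k+1))))
        = (n.choose k : R) * (degFall y lam (k+1) * degFall z lam (n - k))
          + (n.choose (k+1) : R) * (degFall y lam (k+1) * degFall z lam (n - k)) := by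
      intro k hk
      rw [Nat.choose_succ_succ]
      simp only [Nat.succ_sub_succ, Nat.succ_eq_add_one]
      push_cast
      ring
    rw [Finset.sum_congr rfl hcongr, Finset.sum_add_distrib]
    have h2 : (∑ k ∈ Finset.range (n+1),
          (n.choose (k+1) : R) * (degFall y lam (k+1) * degFall z lam (n - k)))
        + ((n+1).choose 0 : R) * (degFall y lam 0 * degFall z lam (n + 1 - 0))
        = ∑ k ∈ Finset.range (n+1),
            (n.choose k : R) * (degFall y lam k * degFall z lam (n - k + 1)) := by
      have hs := Finset.sum_range_succ' (fun k => (n.choose k : R)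
          * (degFall y lam k * degFall z lam (n + 1 - k))) (n+1)
      simp only [Nat.succ_sub_succ, Nat.succ_eq_add_one] at hs
      have h0 : ((n+1).choose 0 : R) * (degFall y lam 0 * degFall z lam (n + 1 - 0))
          = (n.choose 0 : R) * (degFall y lam 0 * degFall z lam (n + 1 - 0)) := by simp
      rw [h0, ← hs, Finset.sum_range_succ]
      simp only [Nat.choose_succ_self, Nat.cast_zero, zero_mul, add_zero]
      refine Finset.sum_congr rfl fun k hk => ?_
      have hkn : k ≤ n := Nat.lt_succ_iff.mp (Finset.mem_range.mp hk)
      rw [Nat.succ_sub hkn]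
    rw [add_assoc, h2]

lemma degFall_map {S : Type*} [CommRing S] (ϕ : R →+* S) (y lam : R) (n : ℕ) :
    ϕ (degFall y lam n) = degFall (ϕ y) (ϕ lam) n := by
  simp [degFall, map_prod]

lemma degFall_mul_left (c y lam : R) (n : ℕ) :
    degFall (c * y) (c * lam) n = c ^ n * degFall y lam n := by
  calc degFall (c * y) (c * lam) n = ∏ j ∈ Finset.range n, (c * (y - (j:R) * lam)) :=
        Finset.prod_congr rfl fun j _ => by ring
    _ = c ^ n * degFall y lam n := by
        rw [Finset.prod_mul_distrib, Finset.prod_const, Finset.card_range]; rfl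

variable [Algebra ℚ R]

lemma coeff_degSeries (y lam : R) (n : ℕ) :
    (PowerSeries.coeff n) (degSeries y lam) = (n ! : ℚ)⁻¹ • degFall y lam n := by
  simp [degSeries]

lemma constantCoeff_degSeries (y lam : R) :
    PowerSeries.constantCoeff (degSeries y lam) = 1 := by
  simp [degSeries, degFall_zero]

lemma degSeries_add (y z lam : R) :
    degSeries (y + z) lam = degSeries y lam * degSeries z lam := by
  ext n
  rw [PowerSeries.coeff_mul, Finset.Nat.sum_antidiagonal_eq_sum_range_succ_mk]
  simp only [coeff_degSeries]
  rw [degFall_vandermonde, Finset.smul_sum]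
  refine Finset.sum_congr rfl fun k hk => ?_
  have hkn : k ≤ n := Nat.lt_succ_iff.mp (Finset.mem_range.mp hk)
  rw [smul_mul_smul_comm]
  have hcast : ((n.choose k : R)) = algebraMap ℚ R ((n.choose k : ℚ)) := by simp
  rw [hcast, ← Algebra.smul_def, smul_smul]
  congr 1
  rw [Nat.cast_choose ℚ hkn]
  have h1 : (k ! : ℚ) ≠ 0 := by positivity
  have h2 : ((n-k)! : ℚ) ≠ 0 := by positivity
  have h3 : (n ! : ℚ) ≠ 0 := by positivity
  field_simp

lemma degSeries_zero (lam : R) : degSeries (0 : R) lam = 1 := by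
  ext n
  cases n with
  | zero => simp [degSeries, degFall_zero]
  | succ n =>
    have : degFall (0 : R) lam (n + 1) = 0 := by
      unfold degFall
      exact Finset.prod_eq_zero (i := 0) (by simp) (by simp)
    simp [degSeries, this]

lemma degSeries_nsmul (k : ℕ) (y lam : R) :
    degSeries ((k : R) * y) lam = degSeries y lam ^ k := by
  induction k with
  | zero => simpa using degSeries_zero lam
  | succ k ih =>
    have : ((k + 1 : ℕ) : R) * y = (k : R) * y + y := by push_cast; ring
    rw [this, degSeries_add, ih, pow_succ]

lemma rescale_degSeries (c y lam : R) :
    PowerSeries.rescale c (degSeries y lam) = degSeries (c * y) (c * lam) := by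
  ext n
  rw [PowerSeries.coeff_rescale]
  simp [coeff_degSeries, degFall_mul_left, mul_smul_comm]

end aux

section cx
open PowerSeries Polynomial

local notation "T" => PowerSeries (Polynomial ℂ)

lemma smul_ps (c : ℂ) (f : T) :
    c • f = PowerSeries.C (Polynomial.C c) * f := by
  ext n
  rw [PowerSeries.coeff_smul, PowerSeries.coeff_C_mul, Polynomial.smul_eq_C_mul]

lemma rescale_Cc (a : Polynomial ℂ) (r : Polynomial ℂ) :
    PowerSeries.rescale a (PowerSeries.C r) = PowerSeries.C r := by
  ext n
  cases n <;> simp [PowerSeries.coeff_rescale, PowerSeries.coeff_C]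

lemma map_degSeriesC (ϕ : Polynomial ℂ →+* Polynomial ℂ)
    (hϕ : ∀ c : ℂ, ϕ (Polynomial.C c) = Polynomial.C c) (y : Polynomial ℂ) (m : ℂ) :
    PowerSeries.map ϕ (degSeries y (Polynomial.C m)) = degSeries (ϕ y) (Polynomial.C m) := by
  ext n
  rw [PowerSeries.coeff_map, coeff_degSeries, coeff_degSeries,
    Algebra.smul_def, Algebra.smul_def, map_mul, degFall_map, hϕ,
    Polynomial.algebraMap_apply, hϕ]

lemma map_Cc (ϕ : Polynomial ℂ →+* Polynomial ℂ)
    (hϕ : ∀ c : ℂ, ϕ (Polynomial.C c) = Polynomial.C c) (c : ℂ) :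
    PowerSeries.map ϕ (PowerSeries.C (Polynomial.C c))
      = PowerSeries.C (Polynomial.C c) := by
  ext n
  cases n <;> simp [PowerSeries.coeff_map, PowerSeries.coeff_C, hϕ]

end cx


section main
open PowerSeries Polynomial Finset

lemma key_side (d v v' : ℕ) (hd0 : 0 < d) (hd : Odd d) (hv0 : 0 < v) (hv'0 : 0 < v')
    (hv : Odd v) (χ : DirichletCharacter ℂ d) (lam : ℂ)
    (E : ℕ → Polynomial ℂ) (hE : genDegEulerRel d χ (lam / v) E) :
    (degSeries (Polynomial.C ((v:ℂ) * d)) (Polynomial.C lam) + 1) *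
      ((degSeries (Polynomial.C ((v':ℂ) * d)) (Polynomial.C lam) + 1) *
        PowerSeries.rescale (Polynomial.C (v:ℂ))
          (∑ l ∈ Finset.range (d * v),
            PowerSeries.C (Polynomial.C ((-1:ℂ)^l * χ (l : ZMod d))) *
              PowerSeries.map (Polynomial.eval₂RingHom Polynomial.C
                (Polynomial.C (v':ℂ) * Polynomial.X + Polynomial.C ((v':ℂ)/(v:ℂ) * l)))
                (PowerSeries.mk fun n => (n ! : ℂ)⁻¹ • E n)))
    = 2 * ((∑ a ∈ Finset.range d,
          PowerSeries.C (Polynomial.C ((-1:ℂ)^a * χ (a : ZMod d))) *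
            degSeries (Polynomial.C ((v:ℂ) * a)) (Polynomial.C lam)) *
        ((∑ a ∈ Finset.range d,
          PowerSeries.C (Polynomial.C ((-1:ℂ)^a * χ (a : ZMod d))) *
            degSeries (Polynomial.C ((v':ℂ) * a)) (Polynomial.C lam)) *
        (degSeries (Polynomial.C ((v:ℂ)*(v':ℂ)) * Polynomial.X) (Polynomial.C lam) *
          (1 + degSeries (Polynomial.C ((v:ℂ)*(v':ℂ)*(d:ℂ))) (Polynomial.C lam))))) := by
  have hvne : ((v:ℂ)) ≠ 0 := Nat.cast_ne_zero.mpr hv0.ne'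
  -- abbreviations
  set u : ℕ → Polynomial ℂ := fun l =>
    Polynomial.C (v':ℂ) * Polynomial.X + Polynomial.C ((v':ℂ)/(v:ℂ) * l) with hu_def
  set ϕ : ℕ → (Polynomial ℂ →+* Polynomial ℂ) := fun l =>
    Polynomial.eval₂RingHom Polynomial.C (u l) with hϕ_def
  unfold genDegEulerRel at hE
  set M : PowerSeries (Polynomial ℂ) := PowerSeries.mk fun n => (n ! : ℂ)⁻¹ • E n with hM_def
  have hϕC : ∀ (l : ℕ) (c : ℂ), (ϕ l) (Polynomial.C c) = Polynomial.C c := by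
    intro l c; simp [hϕ_def]
  have hϕX : ∀ l : ℕ, (ϕ l) Polynomial.X = u l := by
    intro l; simp [hϕ_def]
  -- Step 1: mapped relation
  have h1 : ∀ l : ℕ,
      (degSeries (Polynomial.C (d:ℂ)) (Polynomial.C (lam/v)) + 1) * PowerSeries.map (ϕ l) M
        = 2 * ((∑ a ∈ Finset.range d,
            PowerSeries.C (Polynomial.C ((-1:ℂ)^a * χ (a : ZMod d))) *
              degSeries (Polynomial.C (a:ℂ)) (Polynomial.C (lam/v))) *
            degSeries (u l) (Polynomial.C (lam/v))) := by
    intro l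
    have h := congrArg (PowerSeries.map (ϕ l)) hE
    simp only [smul_ps, map_mul, map_add, map_one, map_ofNat, map_sum,
      map_degSeriesC _ (hϕC l), map_Cc _ (hϕC l), hϕC l, hϕX l] at h
    simp only [← map_mul] at h
    exact h
  -- Step 2: sum over l with coefficients
  have h2 : (degSeries (Polynomial.C (d:ℂ)) (Polynomial.C (lam/v)) + 1) *
      (∑ l ∈ Finset.range (d*v),
        PowerSeries.C (Polynomial.C ((-1:ℂ)^l * χ (l : ZMod d))) *
          PowerSeries.map (ϕ l) M)
      = 2 * ((∑ a ∈ Finset.range d,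
            PowerSeries.C (Polynomial.C ((-1:ℂ)^a * χ (a : ZMod d))) *
              degSeries (Polynomial.C (a:ℂ)) (Polynomial.C (lam/v))) *
          (∑ l ∈ Finset.range (d*v),
            PowerSeries.C (Polynomial.C ((-1:ℂ)^l * χ (l : ZMod d))) *
              degSeries (u l) (Polynomial.C (lam/v)))) := by
    simp only [Finset.mul_sum]
    refine Finset.sum_congr rfl fun l hl => ?_
    calc (degSeries (Polynomial.C (d:ℂ)) (Polynomial.C (lam/v)) + 1) *
          (PowerSeries.C (Polynomial.C ((-1:ℂ)^l * χ (l : ZMod d))) *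
            PowerSeries.map (ϕ l) M)
        = PowerSeries.C (Polynomial.C ((-1:ℂ)^l * χ (l : ZMod d))) *
            ((degSeries (Polynomial.C (d:ℂ)) (Polynomial.C (lam/v)) + 1) *
              PowerSeries.map (ϕ l) M) := by ring
      _ = _ := by rw [h1 l]; ring
  -- Step 3: rescale by C v
  have hvlam : (v:ℂ) * (lam / v) = lam := by field_simp
  have hvvl : ∀ l : ℕ, (v:ℂ) * ((v':ℂ)/(v:ℂ) * l) = (v':ℂ) * l := by
    intro l; field_simp
  have hu_app : ∀ l : ℕ, u l
      = Polynomial.C (v':ℂ) * Polynomial.X + Polynomial.C ((v':ℂ)/(v:ℂ) * l) :=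
    fun l => rfl
  have hAa : ∀ a : ℕ, PowerSeries.rescale (Polynomial.C (v:ℂ))
        (degSeries (Polynomial.C (a:ℂ)) (Polynomial.C (lam/v)))
      = degSeries (Polynomial.C ((v:ℂ)*a)) (Polynomial.C lam) := by
    intro a
    rw [rescale_degSeries, ← Polynomial.C_mul, ← Polynomial.C_mul, hvlam]
  have hAu : ∀ l : ℕ, PowerSeries.rescale (Polynomial.C (v:ℂ))
        (degSeries (u l) (Polynomial.C (lam/v)))
      = degSeries (Polynomial.C ((v:ℂ)*(v':ℂ)) * Polynomial.X) (Polynomial.C lam) *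
          degSeries (Polynomial.C ((v':ℂ)*l)) (Polynomial.C lam) := by
    intro l
    rw [rescale_degSeries, ← Polynomial.C_mul, hvlam, hu_app l, mul_add, ← mul_assoc,
      ← Polynomial.C_mul, ← Polynomial.C_mul, hvvl l, degSeries_add]
  have hr : ∀ l : ℕ,
      (degSeries (Polynomial.C ((v:ℂ)*d)) (Polynomial.C lam) + 1) *
        PowerSeries.rescale (Polynomial.C (v:ℂ)) (PowerSeries.map (ϕ l) M)
      = 2 * ((∑ a ∈ Finset.range d,
            PowerSeries.C (Polynomial.C ((-1:ℂ)^a * χ (a : ZMod d))) *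
              degSeries (Polynomial.C ((v:ℂ)*a)) (Polynomial.C lam)) *
          (degSeries (Polynomial.C ((v:ℂ)*(v':ℂ)) * Polynomial.X) (Polynomial.C lam) *
            degSeries (Polynomial.C ((v':ℂ)*l)) (Polynomial.C lam))) := by
    intro l
    have h := congrArg (PowerSeries.rescale (Polynomial.C (v:ℂ))) (h1 l)
    simp only [map_mul (PowerSeries.rescale (Polynomial.C (v:ℂ))),
      map_add (PowerSeries.rescale (Polynomial.C (v:ℂ))),
      map_one (PowerSeries.rescale (Polynomial.C (v:ℂ))),
      map_ofNat (PowerSeries.rescale (Polynomial.C (v:ℂ))),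
      map_sum (PowerSeries.rescale (Polynomial.C (v:ℂ))),
      rescale_Cc, hAa, hAu l] at h
    exact h
  have h3 : (degSeries (Polynomial.C ((v:ℂ)*d)) (Polynomial.C lam) + 1) *
      (∑ l ∈ Finset.range (d*v),
        PowerSeries.C (Polynomial.C ((-1:ℂ)^l * χ (l : ZMod d))) *
          PowerSeries.rescale (Polynomial.C (v:ℂ)) (PowerSeries.map (ϕ l) M))
      = 2 * ((∑ a ∈ Finset.range d,
            PowerSeries.C (Polynomial.C ((-1:ℂ)^a * χ (a : ZMod d))) *
              degSeries (Polynomial.C ((v:ℂ)*a)) (Polynomial.C lam)) *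
          (∑ l ∈ Finset.range (d*v),
            PowerSeries.C (Polynomial.C ((-1:ℂ)^l * χ (l : ZMod d))) *
              (degSeries (Polynomial.C ((v:ℂ)*(v':ℂ)) * Polynomial.X) (Polynomial.C lam) *
                degSeries (Polynomial.C ((v':ℂ)*l)) (Polynomial.C lam)))) := by
    simp only [Finset.mul_sum]
    refine Finset.sum_congr rfl fun l hl => ?_
    calc (degSeries (Polynomial.C ((v:ℂ)*d)) (Polynomial.C lam) + 1) *
          (PowerSeries.C (Polynomial.C ((-1:ℂ)^l * χ (l : ZMod d))) *
            PowerSeries.rescale (Polynomial.C (v:ℂ)) (PowerSeries.map (ϕ l) M))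
        = PowerSeries.C (Polynomial.C ((-1:ℂ)^l * χ (l : ZMod d))) *
            ((degSeries (Polynomial.C ((v:ℂ)*d)) (Polynomial.C lam) + 1) *
              PowerSeries.rescale (Polynomial.C (v:ℂ)) (PowerSeries.map (ϕ l) M)) := by
          ring
      _ = _ := by rw [hr l]; ring
  -- pull the symmetric factor out of the sum
  have hpull : (∑ l ∈ Finset.range (d*v),
      PowerSeries.C (Polynomial.C ((-1:ℂ)^l * χ (l : ZMod d))) *
        (degSeries (Polynomial.C ((v:ℂ)*(v':ℂ)) * Polynomial.X) (Polynomial.C lam) *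
          degSeries (Polynomial.C ((v':ℂ)*l)) (Polynomial.C lam)))
      = degSeries (Polynomial.C ((v:ℂ)*(v':ℂ)) * Polynomial.X) (Polynomial.C lam) *
        ∑ l ∈ Finset.range (d*v),
          PowerSeries.C (Polynomial.C ((-1:ℂ)^l * χ (l : ZMod d))) *
            degSeries (Polynomial.C ((v':ℂ)*l)) (Polynomial.C lam) := by
    rw [Finset.mul_sum]
    exact Finset.sum_congr rfl fun l _ => by ring
  -- Step 4: split the long character sum
  have h4 : (∑ l ∈ Finset.range (d*v),
      PowerSeries.C (Polynomial.C ((-1:ℂ)^l * χ (l : ZMod d))) *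
        degSeries (Polynomial.C ((v':ℂ)*l)) (Polynomial.C lam))
      = (∑ a ∈ Finset.range d,
          PowerSeries.C (Polynomial.C ((-1:ℂ)^a * χ (a : ZMod d))) *
            degSeries (Polynomial.C ((v':ℂ)*a)) (Polynomial.C lam)) *
        (∑ j ∈ Finset.range v,
          (-(degSeries (Polynomial.C ((v':ℂ)*d)) (Polynomial.C lam)))^j) := by
    rw [Finset.sum_mul_sum, ← Finset.sum_product']
    refine Finset.sum_nbij' (fun l => (l % d, l / d)) (fun p => p.1 + d * p.2)
      ?_ ?_ ?_ ?_ ?_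
    · intro l hl
      simp only [Finset.mem_range, Finset.mem_product] at hl ⊢
      exact ⟨Nat.mod_lt _ hd0, (Nat.div_lt_iff_lt_mul hd0).mpr (by rw [mul_comm]; exact hl)⟩
    · intro p hp
      simp only [Finset.mem_range, Finset.mem_product] at hp ⊢
      calc p.1 + d * p.2 < d + d * p.2 := by omega
        _ = d * (p.2 + 1) := by ring
        _ ≤ d * v := Nat.mul_le_mul_left d (Nat.succ_le_of_lt hp.2)
    · intro l hl
      exact Nat.mod_add_div l d
    · intro p hp
      simp only [Finset.mem_range, Finset.mem_product] at hp
      have h1' : (p.1 + d * p.2) % d = p.1 := by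
        rw [Nat.add_mul_mod_self_left, Nat.mod_eq_of_lt hp.1]
      have h2' : (p.1 + d * p.2) / d = p.2 := by
        rw [Nat.add_mul_div_left _ _ hd0, Nat.div_eq_of_lt hp.1, zero_add]
      exact Prod.ext h1' h2'
    · intro l hl
      conv_lhs => rw [← Nat.mod_add_div l d]
      set a := l % d with ha
      set q := l / d with hq
      have hchi : χ (((a + d*q : ℕ)) : ZMod d) = χ ((a : ℕ) : ZMod d) := by
        push_cast
        simp [ZMod.natCast_self]
      have hsign : (-1:ℂ)^(a + d*q) = (-1:ℂ)^a * (-1:ℂ)^q := by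
        rw [pow_add, pow_mul, hd.neg_one_pow]
      have hBsplit : degSeries (Polynomial.C ((v':ℂ) * ((a + d*q : ℕ):ℂ)))
            (Polynomial.C lam)
          = degSeries (Polynomial.C ((v':ℂ)*a)) (Polynomial.C lam) *
            (degSeries (Polynomial.C ((v':ℂ)*d)) (Polynomial.C lam))^q := by
        have e : Polynomial.C ((v':ℂ) * ((a + d*q : ℕ):ℂ))
            = Polynomial.C ((v':ℂ)*(a:ℂ)) +
              ((q : ℕ) : Polynomial ℂ) * Polynomial.C ((v':ℂ)*d) := by
          have hq' : ((q : ℕ) : Polynomial ℂ) * Polynomial.C ((v':ℂ)*(d:ℂ))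
              = Polynomial.C (((v':ℂ)*(d:ℂ))*(q:ℂ)) := by
            rw [← map_natCast Polynomial.C q, ← Polynomial.C_mul, mul_comm]
          rw [hq', ← Polynomial.C_add]
          congr 1
          push_cast; ring
        rw [e, degSeries_add, degSeries_nsmul]
      rw [hchi, hsign, hBsplit]
      have hCs : (PowerSeries.C) (Polynomial.C ((-1:ℂ)^q))
          = (-1 : PowerSeries (Polynomial ℂ))^q := by
        rw [map_pow, map_pow, map_neg, map_neg, map_one, map_one]
      rw [show ((-1:ℂ)^a*(-1:ℂ)^q) * χ ((a:ℕ) : ZMod d)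
          = ((-1:ℂ)^a * χ ((a:ℕ) : ZMod d)) * ((-1:ℂ)^q) from by ring]
      rw [Polynomial.C_mul, map_mul, hCs, neg_pow]
      ring
  -- Step 5: geometric sum
  have hpow : (degSeries (Polynomial.C ((v':ℂ)*d)) (Polynomial.C lam))^v
      = degSeries (Polynomial.C ((v:ℂ)*(v':ℂ)*(d:ℂ))) (Polynomial.C lam) := by
    have e : ((v : ℕ) : Polynomial ℂ) * Polynomial.C ((v':ℂ)*(d:ℂ))
        = Polynomial.C ((v:ℂ)*(v':ℂ)*(d:ℂ)) := by
      rw [← map_natCast Polynomial.C v, ← Polynomial.C_mul, ← mul_assoc]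
    rw [← e, ← degSeries_nsmul]
  have hgeom : (∑ j ∈ Finset.range v,
        (-(degSeries (Polynomial.C ((v':ℂ)*d)) (Polynomial.C lam)))^j) *
      (degSeries (Polynomial.C ((v':ℂ)*d)) (Polynomial.C lam) + 1)
      = 1 + degSeries (Polynomial.C ((v:ℂ)*(v':ℂ)*(d:ℂ))) (Polynomial.C lam) := by
    have hg := geom_sum_mul (-(degSeries (Polynomial.C ((v':ℂ)*d)) (Polynomial.C lam))) v
    rw [hv.neg_pow, hpow] at hg
    linear_combination -hg
  -- Assembly
  have hres : PowerSeries.rescale (Polynomial.C (v:ℂ))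
      (∑ l ∈ Finset.range (d*v),
        PowerSeries.C (Polynomial.C ((-1:ℂ)^l * χ (l : ZMod d))) *
          PowerSeries.map (ϕ l) M)
      = ∑ l ∈ Finset.range (d*v),
          PowerSeries.C (Polynomial.C ((-1:ℂ)^l * χ (l : ZMod d))) *
            PowerSeries.rescale (Polynomial.C (v:ℂ)) (PowerSeries.map (ϕ l) M) := by
    rw [map_sum]
    exact Finset.sum_congr rfl fun l _ => by rw [map_mul, rescale_Cc]
  show (degSeries (Polynomial.C ((v:ℂ) * d)) (Polynomial.C lam) + 1) *
      ((degSeries (Polynomial.C ((v':ℂ) * d)) (Polynomial.C lam) + 1) *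
        PowerSeries.rescale (Polynomial.C (v:ℂ))
          (∑ l ∈ Finset.range (d * v),
            PowerSeries.C (Polynomial.C ((-1:ℂ)^l * χ (l : ZMod d))) *
              PowerSeries.map (ϕ l) M)) = _
  rw [hres]
  calc (degSeries (Polynomial.C ((v:ℂ) * d)) (Polynomial.C lam) + 1) *
        ((degSeries (Polynomial.C ((v':ℂ) * d)) (Polynomial.C lam) + 1) *
          (∑ l ∈ Finset.range (d * v),
            PowerSeries.C (Polynomial.C ((-1:ℂ)^l * χ (l : ZMod d))) *
              PowerSeries.rescale (Polynomial.C (v:ℂ)) (PowerSeries.map (ϕ l) M)))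
      = (degSeries (Polynomial.C ((v':ℂ) * d)) (Polynomial.C lam) + 1) *
        ((degSeries (Polynomial.C ((v:ℂ) * d)) (Polynomial.C lam) + 1) *
          (∑ l ∈ Finset.range (d * v),
            PowerSeries.C (Polynomial.C ((-1:ℂ)^l * χ (l : ZMod d))) *
              PowerSeries.rescale (Polynomial.C (v:ℂ)) (PowerSeries.map (ϕ l) M))) := by
        ring
    _ = _ := by
        rw [h3, hpull, h4]
        rw [show ∀ (A B P Q G : PowerSeries (Polynomial ℂ)),
          (B + 1) * (2 * (A * (P * (Q * G)))) = 2 * (A * (Q * (P * (G * (B + 1)))))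
          from fun A B P Q G => by ring]
        rw [hgeom]

end main

/-- identity of symmetry
`w₂^n ∑_{l<dw₂} (−1)^l χ(l) 𝓔_{n,λ/w₂,χ}(w₁x + (w₁/w₂)l)
 = w₁^n ∑_{l<dw₁} (−1)^l χ(l) 𝓔_{n,λ/w₁,χ}(w₂x + (w₂/w₁)l)`,
as polynomials in x over ℂ, for a fixed nonzero λ ∈ ℂ. -/
theorem genDegEuler_symmetry_sum (d w₁ w₂ : ℕ) (hd0 : 0 < d) (hw₁0 : 0 < w₁) (hw₂0 : 0 < w₂)
    (hd : Odd d) (hw₁ : Odd w₁) (hw₂ : Odd w₂)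
    (χ : DirichletCharacter ℂ d) (hχ : χ.conductor = d) (lam : ℂ) (hlam : lam ≠ 0)
    (E₁ E₂ : ℕ → Polynomial ℂ)
    (hE₁ : genDegEulerRel d χ (lam / w₁) E₁)
    (hE₂ : genDegEulerRel d χ (lam / w₂) E₂)
    (n : ℕ) :
    Polynomial.C ((w₂ : ℂ) ^ n) *
        ∑ l ∈ Finset.range (d * w₂),
          Polynomial.C ((-1 : ℂ) ^ l * χ (l : ZMod d)) *
            (E₂ n).comp (Polynomial.C (w₁ : ℂ) * Polynomial.X +
              Polynomial.C ((w₁ : ℂ) / (w₂ : ℂ) * l))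
      = Polynomial.C ((w₁ : ℂ) ^ n) *
          ∑ l ∈ Finset.range (d * w₁),
            Polynomial.C ((-1 : ℂ) ^ l * χ (l : ZMod d)) *
              (E₁ n).comp (Polynomial.C (w₂ : ℂ) * Polynomial.X +
                Polynomial.C ((w₂ : ℂ) / (w₁ : ℂ) * l)) := by
  have hk2 := key_side d w₂ w₁ hd0 hd hw₂0 hw₁0 hw₂ χ lam E₂ hE₂
  have hk1 := key_side d w₁ w₂ hd0 hd hw₁0 hw₂0 hw₁ χ lam E₁ hE₁
  simp only [mul_comm (w₁:ℂ) (w₂:ℂ)] at hk1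
  set R₂ : PowerSeries (Polynomial ℂ) := PowerSeries.rescale (Polynomial.C (w₂:ℂ))
    (∑ l ∈ Finset.range (d * w₂),
      PowerSeries.C (Polynomial.C ((-1:ℂ)^l * χ (l : ZMod d))) *
        PowerSeries.map (Polynomial.eval₂RingHom Polynomial.C
          (Polynomial.C (w₁:ℂ) * Polynomial.X + Polynomial.C ((w₁:ℂ)/(w₂:ℂ) * l)))
          (PowerSeries.mk fun m => (m ! : ℂ)⁻¹ • E₂ m)) with hR₂
  set R₁ : PowerSeries (Polynomial ℂ) := PowerSeries.rescale (Polynomial.C (w₁:ℂ))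
    (∑ l ∈ Finset.range (d * w₁),
      PowerSeries.C (Polynomial.C ((-1:ℂ)^l * χ (l : ZMod d))) *
        PowerSeries.map (Polynomial.eval₂RingHom Polynomial.C
          (Polynomial.C (w₂:ℂ) * Polynomial.X + Polynomial.C ((w₂:ℂ)/(w₁:ℂ) * l)))
          (PowerSeries.mk fun m => (m ! : ℂ)⁻¹ • E₁ m)) with hR₁
  set B₂ : PowerSeries (Polynomial ℂ) :=
    degSeries (Polynomial.C ((w₂:ℂ) * d)) (Polynomial.C lam) with hB₂
  set B₁ : PowerSeries (Polynomial ℂ) :=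
    degSeries (Polynomial.C ((w₁:ℂ) * d)) (Polynomial.C lam) with hB₁
  have hU : ((B₂ + 1) * (B₁ + 1) : PowerSeries (Polynomial ℂ)) ≠ 0 := by
    intro h0
    have h4 := congrArg (PowerSeries.constantCoeff) h0
    simp only [hB₁, hB₂, map_mul, map_add, map_one, map_zero,
      constantCoeff_degSeries] at h4
    norm_num at h4
  have hRR : R₂ = R₁ := by
    refine mul_left_cancel₀ hU ?_
    linear_combination hk2 - hk1
  -- extract the n-th coefficient
  have hterm : ∀ (w w' : ℕ) (E : ℕ → Polynomial ℂ) (l : ℕ),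
      (Polynomial.eval₂RingHom Polynomial.C (Polynomial.C (w':ℂ) * Polynomial.X +
          Polynomial.C ((w':ℂ)/(w:ℂ) * l))) ((n ! : ℂ)⁻¹ • E n)
      = Polynomial.C ((n ! : ℂ)⁻¹) * (E n).comp (Polynomial.C (w':ℂ) * Polynomial.X +
          Polynomial.C ((w':ℂ)/(w:ℂ) * l)) := by
    intro w w' E l
    rw [Polynomial.smul_eq_C_mul, map_mul, Polynomial.coe_eval₂RingHom,
      Polynomial.eval₂_C]
    rfl
  have hco := congrArg (PowerSeries.coeff n) hRR
  rw [hR₂, hR₁, PowerSeries.coeff_rescale, PowerSeries.coeff_rescale,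
    map_sum, map_sum] at hco
  simp only [PowerSeries.coeff_C_mul, PowerSeries.coeff_map, PowerSeries.coeff_mk,
    hterm] at hco
  have hCk : (Polynomial.C ((n ! : ℂ)⁻¹) : Polynomial ℂ) ≠ 0 := by
    rw [Ne, Polynomial.C_eq_zero]
    exact inv_ne_zero (by exact_mod_cast n.factorial_ne_zero)
  rw [map_pow, map_pow]
  refine mul_left_cancel₀ hCk ?_
  have hswap : ∀ (m : ℕ) (w : ℂ) (f : ℕ → ℂ) (g : ℕ → Polynomial ℂ),
      Polynomial.C ((n ! : ℂ)⁻¹) *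
        ((Polynomial.C w)^n * ∑ l ∈ Finset.range m, Polynomial.C (f l) * g l)
      = (Polynomial.C w)^n *
        ∑ l ∈ Finset.range m, Polynomial.C (f l) * (Polynomial.C ((n ! : ℂ)⁻¹) * g l) := by
    intro m w f g
    simp only [Finset.mul_sum]
    exact Finset.sum_congr rfl fun l _ => by ring
  rw [hswap, hswap]
  exact hco
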